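/- Let $X = \bigcup_n X_n$, $\psi : X^2 \to [0,1]$, $\psi_n = \psi \restriction X_n^2$, and assume: for all $u,v,r \in X$, if $u,v,r \in X_n$ then there is $m > n$ with $u,v,r \in X_m$. If the sum-like relation $E((X_n,\psi_n)_n)$ is an equivalence relation, then there exists $C \geq 1$ such that for all $u,v$ lying together in some $X_n$: $\psi(v,u) \leq C\,\psi(u,v)$. -/

import Mathlib

theorem stmt_8 (X : Type*) (Xs : ℕ → Set X) (hne : ∀ n, (Xs n).Nonempty)
    (hcover : ∀ u : X, ∃ n, u ∈ Xs n)
    (ψ : X → X → ℝ) (hψ0 : ∀ u v, 0 ≤ ψ u v) (hψ1 : ∀ u v, ψ u v ≤ 1)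
    (hm2 : ∀ u v r : X, ∀ n, u ∈ Xs n → v ∈ Xs n → r ∈ Xs n →
      ∃ m > n, u ∈ Xs m ∧ v ∈ Xs m ∧ r ∈ Xs m)
    (hE : Equivalence (fun x y : ∀ n, Xs n => Summable (fun n => ψ (x n) (y n)))) :
    ∃ C : ℝ, 1 ≤ C ∧ ∀ u v : X, (∃ n, u ∈ Xs n ∧ v ∈ Xs n) → ψ v u ≤ C * ψ u v := by
  classical
  by_contra hcon
  push_neg at hcon
  have hsel : ∀ k : ℕ, ∃ u v : X, (∃ n, u ∈ Xs n ∧ v ∈ Xs n) ∧ (2:ℝ)^k * ψ u v < ψ v u := by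
    intro k
    exact hcon ((2:ℝ)^k) (one_le_pow₀ one_le_two)
  choose u v hmem hlt using hsel
  choose nk hu hv using hmem
  -- cofinality
  have cof : ∀ k N, ∃ m, N < m ∧ u k ∈ Xs m ∧ v k ∈ Xs m := by
    intro k N
    induction N with
    | zero =>
      obtain ⟨m, hm, h1, h2, _⟩ := hm2 (u k) (v k) (u k) (nk k) (hu k) (hv k) (hu k)
      exact ⟨m, by omega, h1, h2⟩
    | succ N ih =>
      obtain ⟨m, hm, h1, h2⟩ := ih
      obtain ⟨m', hm', h1', h2', _⟩ := hm2 (u k) (v k) (u k) m h1 h2 h1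
      exact ⟨m', by omega, h1', h2'⟩
  set p : ℕ → ℝ := fun k => ψ (u k) (v k) with hpdef
  set q : ℕ → ℝ := fun k => ψ (v k) (u k) with hqdef
  have hp0 : ∀ k, 0 ≤ p k := fun k => hψ0 _ _
  have hq0 : ∀ k, 0 < q k := fun k =>
    lt_of_le_of_lt (mul_nonneg (by positivity) (hp0 k)) (hlt k)
  have hq1 : ∀ k, q k ≤ 1 := fun k => hψ1 _ _
  have hqinv1 : ∀ k, (1:ℝ) ≤ (q k)⁻¹ := fun k => (one_le_inv₀ (hq0 k)).mpr (hq1 k)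
  set Nf : ℕ → ℕ := fun k => ⌈(q k)⁻¹⌉₊ with hNfdef
  have hN1 : ∀ k, 1 ≤ Nf k := fun k => Nat.one_le_ceil_iff.mpr (inv_pos.mpr (hq0 k))
  have hNq : ∀ k, (1:ℝ) ≤ (Nf k : ℝ) * q k := by
    intro k
    calc (1:ℝ) = (q k)⁻¹ * q k := (inv_mul_cancel₀ (hq0 k).ne').symm
      _ ≤ (Nf k : ℝ) * q k := mul_le_mul_of_nonneg_right (Nat.le_ceil _) (hq0 k).le
  have hNle : ∀ k, (Nf k : ℝ) ≤ 2 * (q k)⁻¹ := by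
    intro k
    have h1 : (Nf k : ℝ) < (q k)⁻¹ + 1 := Nat.ceil_lt_add_one (inv_pos.mpr (hq0 k)).le
    have := hqinv1 k
    linarith
  have hple : ∀ k, p k ≤ (2⁻¹:ℝ)^k * q k := by
    intro k
    have h := (hlt k).le
    have h2 : ((2:ℝ)^k)⁻¹ * ((2:ℝ)^k * p k) ≤ ((2:ℝ)^k)⁻¹ * q k :=
      mul_le_mul_of_nonneg_left h (by positivity)
    rw [inv_mul_cancel_left₀ (by positivity)] at h2
    calc p k ≤ ((2:ℝ)^k)⁻¹ * q k := h2
      _ = (2⁻¹:ℝ)^k * q k := by rw [inv_pow]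
  have key : ∀ k, (Nf k : ℝ) * p k ≤ 2 * (2⁻¹:ℝ)^k := by
    intro k
    calc (Nf k : ℝ) * p k ≤ (2 * (q k)⁻¹) * ((2⁻¹:ℝ)^k * q k) :=
          mul_le_mul (hNle k) (hple k) (hp0 k) (mul_nonneg (by norm_num) (inv_pos.mpr (hq0 k)).le)
      _ = 2 * (2⁻¹:ℝ)^k * ((q k)⁻¹ * q k) := by ring
      _ = 2 * (2⁻¹:ℝ)^k := by rw [inv_mul_cancel₀ (hq0 k).ne', mul_one]
  -- blocks
  set S : ℕ → ℕ := fun K => ∑ i ∈ Finset.range K, Nf i with hSdef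
  have hSsucc : ∀ K, S (K+1) = S K + Nf K := fun K => Finset.sum_range_succ _ _
  have hSK : ∀ K, K ≤ S K := by
    intro K
    induction K with
    | zero => simp [hSdef]
    | succ K ih => rw [hSsucc]; have := hN1 K; omega
  have hSmono : Monotone S := monotone_nat_of_le_succ (fun K => by rw [hSsucc]; omega)
  have hcex : ∀ j : ℕ, ∃ K, j < S (K+1) :=
    fun j => ⟨j, lt_of_lt_of_le (Nat.lt_succ_self j) (hSK (j+1))⟩
  set c : ℕ → ℕ := fun j => Nat.find (hcex j) with hcdef
  have hcspec : ∀ j, j < S (c j + 1) := fun j => Nat.find_spec (hcex j)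
  have hcval : ∀ K j, S K ≤ j → j < S (K+1) → c j = K := by
    intro K j h1 h2
    refine le_antisymm (Nat.find_le h2) ?_
    by_contra hlt'
    push_neg at hlt'
    have : S (c j + 1) ≤ S K := hSmono hlt'
    have := hcspec j
    omega
  have hblock : ∀ (w : ℕ → ℝ) (K : ℕ),
      ∑ j ∈ Finset.range (S K), w (c j) = ∑ k ∈ Finset.range K, (Nf k : ℝ) * w k := by
    intro w K
    induction K with
    | zero => simp [hSdef]
    | succ K ih =>
      have hsplit : ∑ j ∈ Finset.range (S (K+1)), w (c j)
          = ∑ j ∈ Finset.range (S K), w (c j) + ∑ j ∈ Finset.Ico (S K) (S (K+1)), w (c j) := by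
        rw [Finset.range_eq_Ico, Finset.range_eq_Ico]
        exact (Finset.sum_Ico_consecutive (fun j => w (c j)) (Nat.zero_le _) (hSmono (Nat.le_succ K))).symm
      have hconst : ∑ j ∈ Finset.Ico (S K) (S (K+1)), w (c j) = (Nf K : ℝ) * w K := by
        have : ∀ j ∈ Finset.Ico (S K) (S (K+1)), w (c j) = w K := by
          intro j hj
          rw [Finset.mem_Ico] at hj
          rw [hcval K j hj.1 hj.2]
        rw [Finset.sum_congr rfl this, Finset.sum_const, Nat.card_Ico, hSsucc]
        simp [nsmul_eq_mul]
      rw [hsplit, ih, hconst, Finset.sum_range_succ]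
  -- schedule
  have cof' : ∀ j N : ℕ, ∃ m, N < m ∧ u (c j) ∈ Xs m ∧ v (c j) ∈ Xs m := fun j N => cof (c j) N
  choose F hF1 hF2 hF3 using cof'
  set msch : ℕ → ℕ := fun j => Nat.rec (F 0 0) (fun j ih => F (j+1) ih) j with hmschdef
  have hmlt : ∀ j, msch j < msch (j+1) := fun j => hF1 (j+1) (msch j)
  have hmmono : StrictMono msch := strictMono_nat_of_lt_succ hmlt
  have hmu : ∀ j, u (c j) ∈ Xs (msch j) := by
    intro j
    cases j with
    | zero => exact hF2 0 0
    | succ j => exact hF2 (j+1) (msch j)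
  have hmv : ∀ j, v (c j) ∈ Xs (msch j) := by
    intro j
    cases j with
    | zero => exact hF3 0 0
    | succ j => exact hF3 (j+1) (msch j)
  set a : (n : ℕ) → X := fun n => (hne n).choose with hadef
  have ha : ∀ n, a n ∈ Xs n := fun n => (hne n).choose_spec
  set x : ∀ n, Xs n := fun n =>
    if h : ∃ j, msch j = n then ⟨u (c h.choose), by have := hmu h.choose; rwa [h.choose_spec] at this⟩
    else ⟨a n, ha n⟩ with hxdef
  set y : ∀ n, Xs n := fun n =>
    if h : ∃ j, msch j = n then ⟨v (c h.choose), by have := hmv h.choose; rwa [h.choose_spec] at this⟩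
    else ⟨a n, ha n⟩ with hydef
  have hxval : ∀ j, (x (msch j) : X) = u (c j) ∧ (y (msch j) : X) = v (c j) := by
    intro j
    have h : ∃ j', msch j' = msch j := ⟨j, rfl⟩
    have hj : h.choose = j := hmmono.injective h.choose_spec
    constructor
    · simp only [hxdef]
      rw [dif_pos h]
      exact congrArg (fun t => u (c t)) hj
    · simp only [hydef]
      rw [dif_pos h]
      exact congrArg (fun t => v (c t)) hj
  have hxval' : ∀ n, (¬∃ j, msch j = n) → (x n : X) = a n ∧ (y n : X) = a n := by
    intro n h
    constructor
    · simp only [hxdef]; rw [dif_neg h]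
    · simp only [hydef]; rw [dif_neg h]
  have hdiag : Summable (fun n => ψ (a n) (a n)) := hE.refl (fun n => ⟨a n, ha n⟩)
  -- summability of p along blocks
  have hgsum : Summable (fun j => p (c j)) := by
    apply summable_of_sum_range_le (c := 4) (fun j => hp0 (c j))
    intro J
    calc ∑ j ∈ Finset.range J, p (c j)
        ≤ ∑ j ∈ Finset.range (S J), p (c j) :=
          Finset.sum_le_sum_of_subset_of_nonneg
            (Finset.range_subset_range.mpr (hSK J)) (fun i _ _ => hp0 (c i))
      _ = ∑ k ∈ Finset.range J, (Nf k : ℝ) * p k := hblock p J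
      _ ≤ ∑ k ∈ Finset.range J, 2 * (2⁻¹:ℝ)^k := Finset.sum_le_sum (fun k _ => key k)
      _ = 2 * ∑ k ∈ Finset.range J, (2⁻¹:ℝ)^k := by rw [Finset.mul_sum]
      _ ≤ 4 := by
          have h := sum_geometric_two_le J
          simp only [one_div] at h
          linarith
  set ext : ℕ → ℝ := Function.extend msch (fun j => p (c j)) (fun _ => 0) with hextdef
  have hextvan : ∀ n ∉ Set.range msch, ext n = 0 := by
    intro n hn
    exact Function.extend_apply' _ _ _ (by simpa [Set.mem_range] using hn)
  have hextcomp : ∀ j, ext (msch j) = p (c j) := fun j =>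
    hmmono.injective.extend_apply _ _ _
  have hext : Summable ext := by
    refine (hmmono.injective.summable_iff hextvan).mp ?_
    exact Summable.congr hgsum (fun j => (hextcomp j).symm)
  have hxy : Summable (fun n => ψ ((x n : X)) ((y n : X))) := by
    apply Summable.of_nonneg_of_le (fun n => hψ0 _ _) ?_ (hdiag.add hext)
    intro n
    by_cases h : ∃ j, msch j = n
    · obtain ⟨j, rfl⟩ := h
      rw [(hxval j).1, (hxval j).2, hextcomp j]
      have : ψ (u (c j)) (v (c j)) = p (c j) := rfl
      rw [this]
      have := hψ0 (a (msch j)) (a (msch j))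
      linarith
    · rw [(hxval' n h).1, (hxval' n h).2, hextvan n (by simpa [Set.mem_range] using h)]
      simp
  have hyx : Summable (fun n => ψ ((y n : X)) ((x n : X))) := hE.symm hxy
  have hq' : Summable (fun j => ψ ((y (msch j) : X)) ((x (msch j) : X))) :=
    hyx.comp_injective hmmono.injective
  have hqsum : Summable (fun j => q (c j)) := by
    refine Summable.congr hq' (fun j => ?_)
    rw [(hxval j).1, (hxval j).2]
  obtain ⟨K, hK⟩ := exists_nat_gt (∑' j, q (c j))
  have h1 : (K:ℝ) ≤ ∑ k ∈ Finset.range K, (Nf k:ℝ) * q k := by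
    calc (K:ℝ) = ∑ _k ∈ Finset.range K, (1:ℝ) := by simp
      _ ≤ ∑ k ∈ Finset.range K, (Nf k:ℝ) * q k := Finset.sum_le_sum (fun k _ => hNq k)
  have h2 : ∑ k ∈ Finset.range K, (Nf k:ℝ) * q k = ∑ j ∈ Finset.range (S K), q (c j) :=
    (hblock q K).symm
  have h3 : ∑ j ∈ Finset.range (S K), q (c j) ≤ ∑' j, q (c j) :=
    Summable.sum_le_tsum _ (fun b _ => (hq0 (c b)).le) hqsum
  linarith
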